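/- Let D ⊆ ℂ^N be a convex domain containing the origin and containing no complex affine line. Then there exist ℂ-linearly independent complex linear functionals L_1, …, L_N : ℂ^N → ℂ and real numbers a_1, …, a_N such that D ⊆ {z ∈ ℂ^N : Re L_1(z) > a_1, …, Re L_N(z) > a_N}. -/

import Mathlib

/-- A convex domain in `ℂ^N`: a nonempty open convex subset. -/
def IsConvexDomain {N : ℕ} (D : Set (Fin N → ℂ)) : Prop :=
  IsOpen D ∧ Convex ℝ D ∧ D.Nonempty

/-- `S` contains a complex affine line `{p + ζ • v : ζ ∈ ℂ}` with `v ≠ 0`. -/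
def ContainsComplexLine {E : Type*} [AddCommGroup E] [Module ℂ E] (S : Set E) : Prop :=
  ∃ p v : E, v ≠ 0 ∧ ∀ ζ : ℂ, p + ζ • v ∈ S

/-- Proposition 3.5, Siegel-type separation: if `D ⊆ ℂ^N` is a convex
domain containing the origin and no complex affine line, then there are `ℂ`-linearly
independent linear functionals `L₁, …, L_N` and reals `a₁, …, a_N` with
`D ⊆ {z : Re Lⱼ(z) > aⱼ, j = 1, …, N}`. -/
theorem siegel_separation {N : ℕ} (D : Set (Fin N → ℂ)) (hD : IsConvexDomain D)
    (h0 : (0 : Fin N → ℂ) ∈ D) (hline : ¬ ContainsComplexLine D) :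
    ∃ (L : Fin N → ((Fin N → ℂ) →ₗ[ℂ] ℂ)) (a : Fin N → ℝ),
      LinearIndependent ℂ L ∧ ∀ z ∈ D, ∀ j, a j < ((L j) z).re := by
  obtain ⟨hopen, hconv, -⟩ := hD
  -- the set of functionals whose real part is bounded below on D
  set S : Set ((Fin N → ℂ) →ₗ[ℂ] ℂ) :=
    {L | ∃ c : ℝ, ∀ z ∈ D, c < (L z).re} with hS
  -- S spans the dual space
  have hspan : Submodule.span ℂ S = ⊤ := by
    apply Submodule.span_eq_top_of_ne_zero
    intro v hv
    by_contra hcon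
    push_neg at hcon
    -- every functional in S vanishes on v; show the line ℂ v lies in D
    apply hline
    refine ⟨0, v, hv, fun ζ => ?_⟩
    rw [zero_add]
    by_contra hmem
    obtain ⟨f, hf⟩ := geometric_hahn_banach_open_point hconv hopen hmem
    -- extend -f to a ℂ-linear functional
    set L : (Fin N → ℂ) →ₗ[ℂ] ℂ := LinearMap.extendTo𝕜' (-(f.toLinearMap)) with hL
    have hre : ∀ x, (L x).re = -(f x) := by
      intro x
      have := LinearMap.extendTo𝕜'_apply_re (𝕜 := ℂ) (-(f.toLinearMap)) x
      rw [RCLike.re_to_complex] at this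
      simp at this
      exact this
    have hLS : L ∈ S := by
      refine ⟨-(f (ζ • v)), fun z hz => ?_⟩
      rw [hre]
      exact neg_lt_neg (hf z hz)
    have hLv : L v = 0 := hcon L hLS
    have h1 : (L (ζ • v)).re = 0 := by rw [map_smul, hLv, smul_zero, Complex.zero_re]
    rw [hre] at h1
    have h2 : (0:ℝ) < f (ζ • v) := by simpa using hf 0 h0
    linarith
  -- extract a basis from S
  obtain ⟨t, hts, hsp, hli⟩ := exists_linearIndependent ℂ S
  rw [hspan] at hsp
  let b : Module.Basis t ℂ ((Fin N → ℂ) →ₗ[ℂ] ℂ) := Module.Basis.mk hli (by rw [Subtype.range_coe, hsp])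
  let e : t ≃ Fin N := b.indexEquiv ((Pi.basisFun ℂ (Fin N)).dualBasis)
  refine ⟨fun j => (e.symm j : ((Fin N → ℂ) →ₗ[ℂ] ℂ)), ?_, ?_, ?_⟩
  · -- the bounds
    exact fun j => Classical.choose (hts (e.symm j).2)
  · -- linear independence
    have := (b.reindex e).linearIndependent
    have hco : ⇑(b.reindex e) = fun j => ((e.symm j : t) : ((Fin N → ℂ) →ₗ[ℂ] ℂ)) := by
      funext j
      rw [Module.Basis.reindex_apply]
      simp only [b, Module.Basis.mk_apply]
    rwa [hco] at this
  · intro z hz j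
    exact Classical.choose_spec (hts (e.symm j).2) z hz
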